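/- Let f be a nonzero polynomial in N variables with complex coefficients and no constant term, and let h₁,...,h_M be i.i.d. standard complex Gaussian random variables. Then there exist constants A > 0, B > 0, d > 0, δ > 0 (independent of k) such that for all k ≥ δ, P(|f(h₁,...,h_M)|² > k) ≤ A·exp(−B·k^(1/d)). -/

import Mathlib

open scoped NNReal
open MeasureTheory ProbabilityTheory Real Set

/-- The standard circularly-symmetric complex Gaussian distribution `CN(0,1)`:
real and imaginary parts are independent real Gaussians of variance `1/2`. -/
noncomputable def stdComplexGaussian : Measure ℂ :=
  Measure.map Complex.measurableEquivRealProd.symm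
    ((gaussianReal 0 (1/2)).prod (gaussianReal 0 (1/2)))


lemma pdf_le (x : ℝ) (hx : 1 ≤ |x|) :
    gaussianPDFReal 0 (1/2) x ≤ Real.exp (-|x|) := by
  rw [gaussianPDFReal]
  have hv : ((1/2 : ℝ≥0) : ℝ) = 1/2 := by norm_num
  rw [hv]
  have h1 : (Real.sqrt (2 * π * (1/2)))⁻¹ ≤ 1 := by
    rw [inv_le_one_iff₀]
    right
    rw [show (2 * π * (1/2)) = π by ring]
    nlinarith [Real.sqrt_le_sqrt (by linarith [Real.two_le_pi] : (1:ℝ) ≤ π), Real.sqrt_one,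
      Real.sq_sqrt Real.pi_pos.le, Real.sqrt_nonneg π]
  have h2 : rexp (-(x - 0)^2 / (2 * (1/2))) ≤ rexp (-|x|) := by
    apply Real.exp_le_exp.mpr
    have : |x| ≤ x^2 := by nlinarith [sq_abs x, abs_nonneg x]
    nlinarith
  calc (Real.sqrt (2 * π * (1/2)))⁻¹ * rexp (-(x - 0)^2 / (2 * (1/2)))
      ≤ 1 * rexp (-|x|) := by
        exact mul_le_mul h1 h2 (Real.exp_nonneg _) one_pos.le
    _ = rexp (-|x|) := one_mul _

lemma tail_Ioi (s : ℝ) (hs : 1 ≤ s) :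
    ∫⁻ x in Ioi s, gaussianPDF 0 (1/2) x ≤ ENNReal.ofReal (Real.exp (-s)) := by
  calc ∫⁻ x in Ioi s, gaussianPDF 0 (1/2) x
      ≤ ∫⁻ x in Ioi s, ENNReal.ofReal (Real.exp (-x)) := by
        refine setLIntegral_mono (by fun_prop) fun x hx => ?_
        refine ENNReal.ofReal_le_ofReal ?_
        have hax : s ≤ x := (mem_Ioi.mp hx).le
        have h1 : (1:ℝ) ≤ |x| := hs.trans (hax.trans (le_abs_self x))
        calc gaussianPDFReal 0 (1/2) x ≤ rexp (-|x|) := pdf_le x h1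
          _ ≤ rexp (-x) := by
            apply Real.exp_le_exp.mpr; simp [neg_le_neg_iff, le_abs_self]
    _ = ENNReal.ofReal (∫ x in Ioi s, Real.exp (-x)) := by
        rw [← ofReal_integral_eq_lintegral_ofReal]
        · exact ((exp_neg_integrableOn_Ioi s one_pos).congr_fun
            (fun x _ => by norm_num) measurableSet_Ioi)
        · exact Filter.Eventually.of_forall fun x => (Real.exp_nonneg _)
    _ = ENNReal.ofReal (Real.exp (-s)) := by rw [integral_exp_neg_Ioi]

lemma gauss_tail (s : ℝ) (hs : 1 ≤ s) :
    (gaussianReal 0 (1/2)) {x | s < |x|} ≤ ENNReal.ofReal (2 * Real.exp (-s)) := by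
  have hv : (1/2 : ℝ≥0) ≠ 0 := by norm_num
  have hsub : {x : ℝ | s < |x|} ⊆ Iio (-s) ∪ Ioi s := by
    intro x hx
    simp only [mem_setOf_eq] at hx
    rcases lt_abs.mp hx with h1 | h2
    · exact Or.inr h1
    · exact Or.inl (by simpa [mem_Iio] using by linarith)
  have hIoi : (gaussianReal 0 (1/2)) (Ioi s) ≤ ENNReal.ofReal (Real.exp (-s)) := by
    rw [gaussianReal_apply 0 hv _ ]
    exact tail_Ioi s hs
  have hIio : (gaussianReal 0 (1/2)) (Iio (-s)) ≤ ENNReal.ofReal (Real.exp (-s)) := by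
    have hmap : Measure.map (fun x : ℝ => -x) (gaussianReal 0 (1/2)) = gaussianReal 0 (1/2) := by
      have := gaussianReal_map_const_mul (μ := 0) (v := 1/2) (-1 : ℝ)
      simp only [neg_one_mul, mul_zero] at this
      convert this using 2
      · norm_num
    have : (gaussianReal 0 (1/2)) (Iio (-s))
        = (gaussianReal 0 (1/2)) ((fun x : ℝ => -x) ⁻¹' (Iio (-s))) := by
      conv_lhs => rw [← hmap]
      rw [Measure.map_apply measurable_neg measurableSet_Iio]
    rw [this]
    have hpre : (fun x : ℝ => -x) ⁻¹' (Iio (-s)) = Ioi s := by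
      ext x; simp [neg_lt_neg_iff]
    rw [hpre]
    exact hIoi
  calc (gaussianReal 0 (1/2)) {x | s < |x|}
      ≤ (gaussianReal 0 (1/2)) (Iio (-s) ∪ Ioi s) := measure_mono hsub
    _ ≤ (gaussianReal 0 (1/2)) (Iio (-s)) + (gaussianReal 0 (1/2)) (Ioi s) := measure_union_le _ _
    _ ≤ ENNReal.ofReal (Real.exp (-s)) + ENNReal.ofReal (Real.exp (-s)) := add_le_add hIio hIoi
    _ = ENNReal.ofReal (2 * Real.exp (-s)) := by
        rw [← ENNReal.ofReal_add (Real.exp_nonneg _) (Real.exp_nonneg _)]; ring_nf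

lemma complex_tail (t : ℝ) (ht : 2 ≤ t) :
    stdComplexGaussian {z : ℂ | t < ‖z‖} ≤ ENNReal.ofReal (4 * Real.exp (-(t/2))) := by
  have hmeasS : MeasurableSet {z : ℂ | t < ‖z‖} :=
    measurableSet_lt measurable_const measurable_norm
  rw [stdComplexGaussian, Measure.map_apply Complex.measurableEquivRealProd.symm.measurable hmeasS]
  set ν := gaussianReal 0 (1/2)
  have hsub : Complex.measurableEquivRealProd.symm ⁻¹' {z : ℂ | t < ‖z‖}
      ⊆ ({x : ℝ | t/2 < |x|} ×ˢ univ) ∪ (univ ×ˢ {y : ℝ | t/2 < |y|}) := by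
    rintro ⟨a, b⟩ hp
    simp only [mem_preimage, mem_setOf_eq] at hp
    have hz : (Complex.measurableEquivRealProd.symm (a, b)) = Complex.mk a b := rfl
    rw [hz] at hp
    have habs : ‖Complex.mk a b‖ ≤ |a| + |b| := by
      have := Complex.norm_le_abs_re_add_abs_im (Complex.mk a b)
      simpa using this
    by_cases hA : t/2 < |a|
    · exact Or.inl ⟨hA, mem_univ _⟩
    · refine Or.inr ⟨mem_univ _, ?_⟩
      simp only [mem_setOf_eq]
      push_neg at hA
      nlinarith [le_trans hp.le habs]
  have h1 : (ν.prod ν) ({x : ℝ | t/2 < |x|} ×ˢ univ) ≤ ENNReal.ofReal (2 * Real.exp (-(t/2))) := by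
    rw [Measure.prod_prod, measure_univ, mul_one]
    exact gauss_tail (t/2) (by linarith)
  have h2 : (ν.prod ν) (univ ×ˢ {y : ℝ | t/2 < |y|}) ≤ ENNReal.ofReal (2 * Real.exp (-(t/2))) := by
    rw [Measure.prod_prod, measure_univ, one_mul]
    exact gauss_tail (t/2) (by linarith)
  calc (ν.prod ν) (Complex.measurableEquivRealProd.symm ⁻¹' {z : ℂ | t < ‖z‖})
      ≤ (ν.prod ν) (({x : ℝ | t/2 < |x|} ×ˢ univ) ∪ (univ ×ˢ {y : ℝ | t/2 < |y|})) :=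
        measure_mono hsub
    _ ≤ _ := measure_union_le _ _
    _ ≤ ENNReal.ofReal (2 * Real.exp (-(t/2))) + ENNReal.ofReal (2 * Real.exp (-(t/2))) :=
        add_le_add h1 h2
    _ = ENNReal.ofReal (4 * Real.exp (-(t/2))) := by
        rw [← ENNReal.ofReal_add (by positivity) (by positivity)]; ring_nf

set_option maxHeartbeats 1000000 in
lemma poly_bound {M : ℕ} (f : MvPolynomial (Fin M) ℂ) (x : Fin M → ℂ) :
    ‖MvPolynomial.eval x f‖ ≤
      (∑ s ∈ f.support, ‖MvPolynomial.coeff s f‖) *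
        (1 + ∑ i, ‖x i‖) ^ f.totalDegree := by
  set R := 1 + ∑ i, ‖x i‖ with hR
  have hR1 : 1 ≤ R := by
    have : (0:ℝ) ≤ ∑ i, ‖x i‖ := Finset.sum_nonneg fun i _ => norm_nonneg _
    rw [hR]; linarith
  have hxR : ∀ i, ‖x i‖ ≤ R := fun i => by
    have h1 : ‖x i‖ ≤ ∑ j, ‖x j‖ :=
      Finset.single_le_sum (fun j _ => norm_nonneg (x j)) (Finset.mem_univ i)
    rw [hR]; linarith
  rw [MvPolynomial.eval_eq]
  calc ‖∑ s ∈ f.support, MvPolynomial.coeff s f * ∏ i ∈ s.support, x i ^ s i‖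
      ≤ ∑ s ∈ f.support, ‖MvPolynomial.coeff s f * ∏ i ∈ s.support, x i ^ s i‖ :=
        norm_sum_le _ _
    _ ≤ ∑ s ∈ f.support, ‖MvPolynomial.coeff s f‖ * R ^ f.totalDegree := by
        refine Finset.sum_le_sum fun s hs => ?_
        rw [norm_mul]
        refine mul_le_mul_of_nonneg_left ?_ (norm_nonneg _)
        calc ‖∏ i ∈ s.support, x i ^ s i‖
            = ∏ i ∈ s.support, ‖x i ^ s i‖ := norm_prod _ _
          _ ≤ ∏ i ∈ s.support, R ^ s i := by
              refine Finset.prod_le_prod (fun i _ => norm_nonneg _) fun i _ => ?_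
              rw [norm_pow]
              exact pow_le_pow_left₀ (norm_nonneg _) (hxR i) _
          _ = R ^ (∑ i ∈ s.support, s i) := by rw [Finset.prod_pow_eq_pow_sum]
          _ ≤ R ^ f.totalDegree := by
              apply pow_le_pow_right₀ hR1
              exact MvPolynomial.le_totalDegree hs
    _ = (∑ s ∈ f.support, ‖MvPolynomial.coeff s f‖) * R ^ f.totalDegree := by
        rw [Finset.sum_mul]

/-- Tail bound for a polynomial without constant term in i.i.d. standard complex
Gaussian random variables: there are constants `A, B, d, δ > 0` such that
`P(|f(h)|² > k) ≤ A exp(-B k^(1/d))` for all `k ≥ δ`. -/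
theorem stmt_2 {Ω : Type*} [MeasurableSpace Ω] (P : Measure Ω) [IsProbabilityMeasure P]
    (M : ℕ) (h : Fin M → Ω → ℂ) (hmeas : ∀ i, Measurable (h i))
    (hindep : iIndepFun h P)
    (hdist : ∀ i, Measure.map (h i) P = stdComplexGaussian)
    (f : MvPolynomial (Fin M) ℂ) (hf : f ≠ 0) (hf0 : MvPolynomial.constantCoeff f = 0) :
    ∃ A B d δ : ℝ, 0 < A ∧ 0 < B ∧ 0 < d ∧ 0 < δ ∧
      ∀ k : ℝ, δ ≤ k →
        (P {ω | k < ‖MvPolynomial.eval (fun i => h i ω) f‖ ^ 2}).toReal ≤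
          A * Real.exp (-B * k ^ (1 / d)) := by
  classical
  -- pick a nonzero exponent in the support
  obtain ⟨s₀, hs₀⟩ := (MvPolynomial.support_nonempty.mpr hf)
  have hs₀ne : s₀ ≠ 0 := by
    rintro rfl
    exact (MvPolynomial.mem_support_iff.mp hs₀) hf0
  obtain ⟨i₀, hi₀⟩ := Finsupp.support_nonempty_iff.mpr hs₀ne
  have hM : 0 < M := i₀.pos
  set C : ℝ := ∑ s ∈ f.support, ‖MvPolynomial.coeff s f‖ with hCdef
  have hC : 0 < C := by
    refine Finset.sum_pos' (fun s _ => norm_nonneg _) ⟨s₀, hs₀, ?_⟩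
    simpa using MvPolynomial.mem_support_iff.mp hs₀
  set D : ℕ := f.totalDegree with hDdef
  have hD : 1 ≤ D := by
    have h1 : 1 ≤ ∑ i ∈ s₀.support, s₀ i := by
      calc 1 ≤ s₀ i₀ := Nat.one_le_iff_ne_zero.mpr (Finsupp.mem_support_iff.mp hi₀)
        _ ≤ _ := Finset.single_le_sum (fun i _ => Nat.zero_le _) hi₀
    exact h1.trans (MvPolynomial.le_totalDegree hs₀)
  have hDpos : (0:ℝ) < 2 * D := by positivity
  set c : ℝ := (C^2) ^ ((1:ℝ)/(2*D)) with hcdef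
  have hcpos : 0 < c := Real.rpow_pos_of_pos (by positivity) _
  refine ⟨4*M, 1/(4*M*c), 2*D, max 1 (C^2 * (2*M+1)^(2*D)), by positivity, by positivity,
    by positivity, lt_max_of_lt_left one_pos, fun k hk => ?_⟩
  have hk1 : (1:ℝ) ≤ k := le_trans (le_max_left _ _) hk
  have hk0 : (0:ℝ) < k := lt_of_lt_of_le one_pos hk1
  set T : ℝ := (k / C^2) ^ ((1:ℝ)/(2*D)) with hTdef
  have hT : 2*M+1 ≤ T := by
    have h1 : ((2*(M:ℝ)+1))^(2*D) ≤ k / C^2 := by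
      rw [le_div_iff₀ (by positivity)]
      calc (2*(M:ℝ)+1)^(2*D) * C^2 = C^2 * (2*M+1)^(2*D) := by ring
        _ ≤ max 1 (C^2 * (2*M+1)^(2*D)) := le_max_right _ _
        _ ≤ k := hk
    calc (2*(M:ℝ)+1) = (((2*(M:ℝ)+1))^(2*D)) ^ ((1:ℝ)/(2*D)) := by
          rw [← Real.rpow_natCast (2*(M:ℝ)+1) (2*D), ← Real.rpow_mul (by positivity)]
          push_cast
          rw [mul_one_div, div_self (by positivity), Real.rpow_one]
      _ ≤ T := Real.rpow_le_rpow (by positivity) h1 (by positivity)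
  have hT2 : (2:ℝ) ≤ T := by
    have : (1:ℝ) ≤ M := by exact_mod_cast hM
    linarith
  set t : ℝ := (T - 1) / M with htdef
  have ht2 : (2:ℝ) ≤ t := by
    rw [htdef, le_div_iff₀ (by exact_mod_cast hM)]
    linarith
  have hmeasS : MeasurableSet {z : ℂ | t < ‖z‖} :=
    measurableSet_lt measurable_const measurable_norm
  -- event inclusion
  have hincl : {ω | k < ‖MvPolynomial.eval (fun i => h i ω) f‖ ^ 2}
      ⊆ ⋃ i, h i ⁻¹' {z : ℂ | t < ‖z‖} := by
    intro ω hω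
    simp only [mem_setOf_eq] at hω
    set x : Fin M → ℂ := fun i => h i ω with hxdef
    set R : ℝ := 1 + ∑ i, ‖x i‖ with hRdef
    have hR1 : (1:ℝ) ≤ R := by
      have : (0:ℝ) ≤ ∑ i, ‖x i‖ := Finset.sum_nonneg fun i _ => norm_nonneg _
      rw [hRdef]; linarith
    have hbd : ‖MvPolynomial.eval x f‖ ≤ C * R ^ D := poly_bound f x
    have hk2 : k < C^2 * R^(2*D) := by
      calc k < ‖MvPolynomial.eval x f‖ ^ 2 := hω
        _ ≤ (C * R ^ D)^2 := by
            apply pow_le_pow_left₀ (norm_nonneg _) hbd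
        _ = C^2 * R^(2*D) := by rw [mul_pow, ← pow_mul, mul_comm D 2]
    have hTR : T < R := by
      have h1 : k / C^2 < R^(2*D) := by
        rw [div_lt_iff₀ (by positivity)]; linarith [hk2]
      calc T < (R^(2*D)) ^ ((1:ℝ)/(2*D)) :=
            Real.rpow_lt_rpow (by positivity) h1 (by positivity)
        _ = R := by
            rw [← Real.rpow_natCast R (2*D), ← Real.rpow_mul (by linarith)]
            push_cast
            rw [mul_one_div, div_self (by positivity), Real.rpow_one]
    by_contra hcon
    simp only [mem_iUnion, mem_preimage, mem_setOf_eq, not_exists, not_lt] at hcon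
    have hsum : ∑ i, ‖x i‖ ≤ M * t := by
      calc ∑ i, ‖x i‖ ≤ ∑ _i : Fin M, t := Finset.sum_le_sum fun i _ => hcon i
        _ = M * t := by rw [Finset.sum_const, Finset.card_univ, Fintype.card_fin,
            nsmul_eq_mul]
    have : R ≤ 1 + M * t := by rw [hRdef]; linarith
    have hMt : (M:ℝ) * t = T - 1 := by
      rw [htdef, mul_div_cancel₀]
      exact_mod_cast hM.ne'
    linarith [hTR]
  -- union bound
  have hstep : P {ω | k < ‖MvPolynomial.eval (fun i => h i ω) f‖ ^ 2}
      ≤ ENNReal.ofReal (4 * M * Real.exp (-(t/2))) := by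
    calc P {ω | k < ‖MvPolynomial.eval (fun i => h i ω) f‖ ^ 2}
        ≤ P (⋃ i, h i ⁻¹' {z : ℂ | t < ‖z‖}) := measure_mono hincl
      _ ≤ ∑ i, P (h i ⁻¹' {z : ℂ | t < ‖z‖}) := measure_iUnion_fintype_le _ _
      _ ≤ ∑ _i : Fin M, ENNReal.ofReal (4 * Real.exp (-(t/2))) := by
          refine Finset.sum_le_sum fun i _ => ?_
          rw [← Measure.map_apply (hmeas i) hmeasS, hdist i]
          exact complex_tail t ht2
      _ = M * ENNReal.ofReal (4 * Real.exp (-(t/2))) := by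
          rw [Finset.sum_const, Finset.card_univ, Fintype.card_fin, nsmul_eq_mul]
      _ = ENNReal.ofReal (4 * M * Real.exp (-(t/2))) := by
          rw [← ENNReal.ofReal_natCast M, ← ENNReal.ofReal_mul (Nat.cast_nonneg M)]
          congr 1; ring
  -- arithmetic: exponent comparison
  have hexp : 4 * (M:ℝ) * Real.exp (-(t/2))
      ≤ 4 * M * Real.exp (-(1/(4*M*c)) * k ^ (1/(2*(D:ℝ)))) := by
    refine mul_le_mul_of_nonneg_left ?_ (by positivity)
    apply Real.exp_le_exp.mpr
    have hkT : k ^ ((1:ℝ)/(2*D)) = T * c := by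
      rw [hTdef, hcdef, ← Real.mul_rpow (by positivity) (by positivity),
        div_mul_cancel₀ _ (by positivity : (C^2 : ℝ) ≠ 0)]
    have h1 : 1/(4*(M:ℝ)*c) * k ^ ((1:ℝ)/(2*(D:ℝ))) = T / (4*M) := by
      rw [hkT]; field_simp
    rw [neg_mul, neg_le_neg_iff, h1, div_le_iff₀ (by positivity)]
    have hMc : (1:ℝ) ≤ M := by exact_mod_cast hM
    rw [htdef]
    rw [div_div, div_mul_eq_mul_div, le_div_iff₀ (by positivity)]
    nlinarith [hT2, hMc]
  -- conclude
  have hfin : P {ω | k < ‖MvPolynomial.eval (fun i => h i ω) f‖ ^ 2}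
      ≤ ENNReal.ofReal (4*M * Real.exp (-(1/(4*M*c)) * k ^ (1/(2*(D:ℝ))))) :=
    hstep.trans (ENNReal.ofReal_le_ofReal hexp)
  have := ENNReal.toReal_le_of_le_ofReal (by positivity) hfin
  exact this
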